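/- Suppose f is strictly regular. Then for every K ∈ ℕ with K ≥ 1 and every price schedule p, TR(p) ≤ max_{t∈[0,1]} t·(1 − F(t)); moreover this maximum is attained, and for any maximizer t* the posted-price schedule p_{t*}(i) = t*·i/K achieves TR(p_{t*}) = t*·(1 − F(t*)). Hence a posted-price schedule is an optimal price schedule. -/

import Mathlib

open MeasureTheory Set

noncomputable section

namespace Stmt0

/-- The demand set of quantity `i` under price schedule `p`, when the good is divided
into `K` equal pieces: the set of types in `[0,1]` that weakly prefer quantity `i`. -/
def demandSet (K : ℕ) (p : ℕ → ℝ) (i : ℕ) : Set ℝ :=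
  {x ∈ Icc (0 : ℝ) 1 | ∀ j ≤ K, x * j / K - p j ≤ x * i / K - p i}

/-- The demand for quantity `i`: the mass of buyers weakly preferring `i`. -/
def demand (f : ℝ → ℝ) (K : ℕ) (p : ℕ → ℝ) (i : ℕ) : ℝ :=
  ∫ x in demandSet K p i, f x

/-- Total revenue of the price schedule `p`. -/
def TR (f : ℝ → ℝ) (K : ℕ) (p : ℕ → ℝ) : ℝ :=
  ∑ i ∈ Finset.Icc 1 K, p i * demand f K p i

/-- The posted-price schedule with price `t`: quantity `i` costs `t·i/K`. -/
def posted (K : ℕ) (t : ℝ) : ℕ → ℝ := fun i => t * i / K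

/-- The c.d.f. of the type distribution. -/
def cdf (f : ℝ → ℝ) (x : ℝ) : ℝ := ∫ s in Icc (0 : ℝ) x, f s

lemma demandSet_subset (K : ℕ) (p : ℕ → ℝ) (i : ℕ) : demandSet K p i ⊆ Icc (0:ℝ) 1 :=
  fun _ hx => hx.1

lemma isClosed_demandSet (K : ℕ) (p : ℕ → ℝ) (i : ℕ) : IsClosed (demandSet K p i) := by
  have h : demandSet K p i =
      Icc (0:ℝ) 1 ∩ ⋂ j ∈ Iic K, {x : ℝ | x * j / K - p j ≤ x * i / K - p i} := by
    ext x
    simp [demandSet, Set.mem_iInter, mem_Iic]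

  rw [h]
  exact isClosed_Icc.inter (isClosed_biInter fun j _ =>
    isClosed_le (by fun_prop) (by fun_prop))

lemma demand_mono (K : ℕ) (hK : 1 ≤ K) (p : ℕ → ℝ) {i j : ℕ} (hi : i ≤ K) (hj : j ≤ K)
    (hij : i < j) {x y : ℝ} (hx : x ∈ demandSet K p i) (hy : y ∈ demandSet K p j) : x ≤ y := by
  have h1 := hx.2 j hj
  have h2 := hy.2 i hi
  have hK' : (0:ℝ) < K := by exact_mod_cast Nat.pos_of_ne_zero (by omega)
  have hij' : (i:ℝ) < j := by exact_mod_cast hij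
  have h1' := mul_le_mul_of_nonneg_right h1 hK'.le
  have h2' := mul_le_mul_of_nonneg_right h2 hK'.le
  rw [sub_mul, sub_mul, div_mul_cancel₀ _ hK'.ne', div_mul_cancel₀ _ hK'.ne'] at h1' h2'
  nlinarith

lemma coverage (K : ℕ) (p : ℕ → ℝ) {x : ℝ} (hx : x ∈ Icc (0:ℝ) 1) :
    ∃ i ≤ K, x ∈ demandSet K p i := by
  obtain ⟨i, hi, hmax⟩ := (Finset.Iic K).exists_max_image (fun j => x * j / K - p j)
    ⟨0, by simp⟩
  exact ⟨i, Finset.mem_Iic.mp hi, hx, fun j hj => hmax j (Finset.mem_Iic.mpr hj)⟩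

lemma integrableOn_of_prob (f : ℝ → ℝ) (hf_prob : ∫ x in Icc (0 : ℝ) 1, f x = 1) :
    IntegrableOn f (Icc (0:ℝ) 1) := by
  by_contra h
  rw [integral_undef h] at hf_prob
  norm_num at hf_prob

lemma cdf_zero (f : ℝ → ℝ) : cdf f 0 = 0 := by
  have : volume (Icc (0:ℝ) 0) = 0 := by simp
  simp [cdf, Measure.restrict_eq_zero.mpr this]

lemma cdf_split (f : ℝ → ℝ) (hfi : IntegrableOn f (Icc (0:ℝ) 1))
    (hf_prob : ∫ x in Icc (0 : ℝ) 1, f x = 1)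
    {a : ℝ} (ha : a ∈ Icc (0:ℝ) 1) :
    ∫ x in Icc a 1, f x = 1 - cdf f a := by
  have hunion : Icc (0:ℝ) a ∪ Ioc a 1 = Icc 0 1 := Icc_union_Ioc_eq_Icc ha.1 ha.2
  have hdisj : Disjoint (Icc (0:ℝ) a) (Ioc a 1) := by
    rw [Set.disjoint_left]; rintro x ⟨_, h1⟩ ⟨h2, _⟩; exact absurd h1 (not_le.mpr h2)
  have h1 : (∫ x in Icc (0:ℝ) a, f x) + (∫ x in Ioc a 1, f x) = 1 := by
    rw [← setIntegral_union hdisj measurableSet_Ioc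
      (hfi.mono_set (by rw [← hunion]; exact subset_union_left))
      (hfi.mono_set (by rw [← hunion]; exact subset_union_right)), hunion, hf_prob]
  have h2 : (∫ x in Ioc a 1, f x) = ∫ x in Icc a 1, f x :=
    setIntegral_congr_set Ioc_ae_eq_Icc
  rw [← h2]
  have : cdf f a = ∫ x in Icc (0:ℝ) a, f x := rfl
  linarith

lemma continuousOn_cdf (f : ℝ → ℝ) (hfi : IntegrableOn f (Icc (0:ℝ) 1)) :
    ContinuousOn (cdf f) (Icc (0:ℝ) 1) := by
  have h : ∀ x ∈ Icc (0:ℝ) 1, cdf f x = ∫ s in (0:ℝ)..x, f s := by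
    intro x hx
    rw [intervalIntegral.integral_of_le hx.1]
    exact (setIntegral_congr_set Ioc_ae_eq_Icc).symm
  have hfi' : IntegrableOn f (uIcc (0:ℝ) 1) := by
    rwa [uIcc_of_le (zero_le_one' ℝ)]
  have hc := intervalIntegral.continuousOn_primitive_interval (μ := volume) hfi'
  rw [uIcc_of_le (zero_le_one' ℝ)] at hc
  exact hc.congr h



lemma posted_demandSet_K (K : ℕ) (hK : 1 ≤ K) {t : ℝ} (ht : t ∈ Icc (0:ℝ) 1) :
    demandSet K (posted K t) K = Icc t 1 := by
  have hK' : (0:ℝ) < K := by exact_mod_cast Nat.pos_of_ne_zero (by omega)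
  ext x
  constructor
  · rintro ⟨hx01, h⟩
    have h0 := h 0 (Nat.zero_le K)
    simp only [posted, Nat.cast_zero, mul_zero, zero_div, zero_mul] at h0
    have : 0 ≤ (x - t) * K / K := by
      rw [sub_mul, sub_div]; linarith
    rw [div_nonneg_iff] at this
    rcases this with ⟨h1, _⟩ | ⟨_, h2⟩
    · have : 0 ≤ x - t := by nlinarith
      exact ⟨by linarith, hx01.2⟩
    · linarith
  · rintro ⟨htx, hx1⟩
    refine ⟨⟨le_trans ht.1 htx, hx1⟩, fun j hj => ?_⟩
    have hj' : (j:ℝ) ≤ K := by exact_mod_cast hj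
    have : (x - t) * j ≤ (x - t) * K :=
      mul_le_mul_of_nonneg_left hj' (by linarith)
    simp only [posted]
    rw [div_sub_div_same, div_sub_div_same, div_le_div_iff₀ hK' hK']
    nlinarith

lemma posted_demandSet_mid (K : ℕ) {t : ℝ} {i : ℕ} (hi1 : 1 ≤ i) (hiK : i < K) :
    demandSet K (posted K t) i ⊆ {t} := by
  have hK' : (0:ℝ) < K := by exact_mod_cast Nat.pos_of_ne_zero (by omega)
  rintro x ⟨hx01, h⟩
  have h0 := h 0 (Nat.zero_le K)
  have hk := h K le_rfl
  simp only [posted, Nat.cast_zero, mul_zero, zero_div, zero_mul] at h0 hk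
  rw [div_sub_div_same, div_sub_div_same, div_le_div_iff₀ hK' hK'] at hk
  have hiR : (0:ℝ) < i := by exact_mod_cast hi1
  have hiKR : (i:ℝ) < K := by exact_mod_cast hiK
  have h0' : 0 ≤ (x - t) * i / K := by rw [sub_mul, sub_div]; linarith
  have h1 : 0 ≤ (x - t) * i := by
    rcases div_nonneg_iff.mp h0' with ⟨h1, _⟩ | ⟨_, h2⟩
    · exact h1
    · linarith
  have h2 : (x - t) * K ≤ (x - t) * i := by nlinarith
  have hxt : x = t := by nlinarith
  simp [hxt]

lemma TR_posted (f : ℝ → ℝ) (hfi : IntegrableOn f (Icc (0:ℝ) 1))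
    (hf_prob : ∫ x in Icc (0 : ℝ) 1, f x = 1)
    (K : ℕ) (hK : 1 ≤ K) {t : ℝ} (ht : t ∈ Icc (0:ℝ) 1) :
    TR f K (posted K t) = t * (1 - cdf f t) := by
  have hK' : (0:ℝ) < K := by exact_mod_cast Nat.pos_of_ne_zero (by omega)
  have hdem : demand f K (posted K t) K = 1 - cdf f t := by
    rw [demand, posted_demandSet_K K hK ht, cdf_split f hfi hf_prob ht]
  rw [TR, Finset.sum_eq_single K]
  · rw [hdem, posted]
    rw [mul_div_assoc, div_self hK'.ne', mul_one]
  · intro i hi hne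
    have hi' := Finset.mem_Icc.mp hi
    have hzero : volume (demandSet K (posted K t) i) = 0 :=
      measure_mono_null (posted_demandSet_mid K hi'.1 (lt_of_le_of_ne hi'.2 hne)) (by simp)
    rw [demand, Measure.restrict_eq_zero.mpr hzero, integral_zero_measure, mul_zero]
  · intro h
    exact absurd (Finset.mem_Icc.mpr ⟨hK, le_rfl⟩) h

lemma demand_nonneg (f : ℝ → ℝ) (hf : ∀ x, 0 ≤ f x) (K : ℕ) (p : ℕ → ℝ) (i : ℕ) :
    0 ≤ demand f K p i :=
  setIntegral_nonneg (isClosed_demandSet K p i).measurableSet (fun x _ => hf x)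

lemma TR_le (f : ℝ → ℝ) (hf_nonneg : ∀ x, 0 ≤ f x)
    (hfi : IntegrableOn f (Icc (0:ℝ) 1))
    (hf_prob : ∫ x in Icc (0 : ℝ) 1, f x = 1)
    (K : ℕ) (hK : 1 ≤ K) {t : ℝ} (ht : t ∈ Icc (0:ℝ) 1)
    (hmax : IsMaxOn (fun s => s * (1 - cdf f s)) (Icc (0 : ℝ) 1) t)
    (p : ℕ → ℝ) (hp0 : p 0 = 0) :
    TR f K p ≤ t * (1 - cdf f t) := by
  have hK' : (0:ℝ) < K := by exact_mod_cast Nat.pos_of_ne_zero (by omega)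
  set E : ℕ → Set ℝ := fun m => (⋃ i ∈ Finset.Icc m K, demandSet K p i) ∪ {1} with hE
  set c : ℕ → ℝ := fun m => sInf (E m) with hc
  have hE1 : ∀ m, (1:ℝ) ∈ E m := fun m => mem_union_right _ rfl
  have hEsub : ∀ m, E m ⊆ Icc (0:ℝ) 1 := by
    intro m
    apply union_subset (iUnion₂_subset fun i _ => demandSet_subset K p i)
    simp
  have hbdd : ∀ m, BddBelow (E m) := fun m => ⟨0, fun x hx => (hEsub m hx).1⟩
  have hcmem : ∀ m, c m ∈ Icc (0:ℝ) 1 := fun m =>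
    ⟨le_csInf ⟨1, hE1 m⟩ (fun x hx => (hEsub m hx).1), csInf_le (hbdd m) (hE1 m)⟩
  -- Lemma A: accumulated marginal cutoff prices bound the price of any active quantity
  have keyA : ∀ i, i ≤ K → (demandSet K p i).Nonempty →
      p i ≤ ∑ m ∈ Finset.Ioc 0 i, c m / K := by
    intro i
    induction i using Nat.strong_induction_on with
    | _ i ih =>
      intro hiK hne
      set a := sInf (demandSet K p i) with ha_def
      have haD : a ∈ demandSet K p i :=
        (isClosed_demandSet K p i).csInf_mem hne ⟨0, fun x hx => hx.1.1⟩
      have ha01 : a ∈ Icc (0:ℝ) 1 := haD.1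
      have hIR : p i ≤ a * i / K := by
        have h0 := haD.2 0 (Nat.zero_le K)
        simp [hp0] at h0
        linarith
      rcases eq_or_lt_of_le ha01.1 with h0 | h0
      · have hpi : p i ≤ 0 := by
          rw [← h0] at hIR
          simpa using hIR
        refine le_trans hpi (Finset.sum_nonneg fun m _ => ?_)
        exact div_nonneg (hcmem m).1 hK'.le
      · -- a > 0 : find active j < i with a ∈ D j
        have hcover : Ico (0:ℝ) a ⊆ ⋃ l ∈ Finset.range i, demandSet K p l := by
          intro x hx
          have hx01 : x ∈ Icc (0:ℝ) 1 := ⟨hx.1, le_trans hx.2.le ha01.2⟩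
          obtain ⟨l, hlK, hl⟩ := coverage K p hx01
          have hli : l < i := by
            by_contra hli
            push_neg at hli
            rcases eq_or_lt_of_le hli with rfl | hlt
            · exact absurd (csInf_le ⟨0, fun y hy => hy.1.1⟩ hl) (not_le.mpr hx.2)
            · exact absurd (demand_mono K hK p hiK hlK hlt haD hl) (not_le.mpr hx.2)
          exact mem_biUnion (Finset.mem_range.mpr hli) hl
        have hclB : IsClosed (⋃ l ∈ Finset.range i, demandSet K p l) :=
          (Finset.range i).finite_toSet.isClosed_biUnion fun l _ => isClosed_demandSet K p l
        have haB : a ∈ ⋃ l ∈ Finset.range i, demandSet K p l := by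
          have hmem : a ∈ closure (Ico (0:ℝ) a) := by
            rw [closure_Ico (ne_of_lt h0)]
            exact ⟨ha01.1, le_rfl⟩
          have h2 := closure_mono hcover hmem
          rwa [hclB.closure_eq] at h2
        obtain ⟨j, hj, haj⟩ := Set.mem_iUnion₂.mp haB
        have hji : j < i := Finset.mem_range.mp hj
        have hjK : j ≤ K := le_trans hji.le hiK
        have heq : p i - p j = a * i / K - a * j / K := by
          have h1 := haD.2 j hjK
          have h2 := haj.2 i hiK
          linarith
        have hacm : ∀ m, j < m → a ≤ c m := by
          intro m hjm
          apply le_csInf ⟨1, hE1 m⟩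
          intro x hx
          rcases hx with hx | hx
          · obtain ⟨l, hl, hxl⟩ := Set.mem_iUnion₂.mp hx
            have hl' := Finset.mem_Icc.mp hl
            exact demand_mono K hK p hjK hl'.2 (lt_of_lt_of_le hjm hl'.1) haj hxl
          · rw [mem_singleton_iff.mp hx]
            exact ha01.2
        have hsplit : ∑ m ∈ Finset.Ioc 0 i, c m / K
            = (∑ m ∈ Finset.Ioc 0 j, c m / K) + ∑ m ∈ Finset.Ioc j i, c m / K :=
          (Finset.sum_Ioc_consecutive _ (Nat.zero_le j) hji.le).symm
        have hconst : ∑ _m ∈ Finset.Ioc j i, (a / (K:ℝ)) = ((i:ℝ) - j) * (a / K) := by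
          rw [Finset.sum_const, Nat.card_Ioc, nsmul_eq_mul, Nat.cast_sub hji.le]
        have hlow : ∑ _m ∈ Finset.Ioc j i, (a / (K:ℝ)) ≤ ∑ m ∈ Finset.Ioc j i, c m / K := by
          apply Finset.sum_le_sum
          intro m hm
          have hm' := Finset.mem_Ioc.mp hm
          gcongr
          exact hacm m hm'.1
        have hIH := ih j hji hjK ⟨a, haj⟩
        have hring : a * i / K - a * j / K = ((i:ℝ) - j) * (a / K) := by ring
        linarith
  -- measurability and a.e.-disjointness facts
  have hmeasD : ∀ i, MeasurableSet (demandSet K p i) :=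
    fun i => (isClosed_demandSet K p i).measurableSet
  set N : Set ℝ := ⋃ (i : ℕ) (j : ℕ) (_ : i < j ∧ j ≤ K), (demandSet K p i ∩ demandSet K p j)
    with hN
  have hNnull : volume N = 0 := by
    refine measure_iUnion_null fun i => measure_iUnion_null fun j => measure_iUnion_null fun hij => ?_
    apply Set.Subsingleton.measure_zero _ volume
    intro x hx y hy
    exact le_antisymm
      (demand_mono K hK p (le_trans hij.1.le hij.2) hij.2 hij.1 hx.1 hy.2)
      (demand_mono K hK p (le_trans hij.1.le hij.2) hij.2 hij.1 hy.1 hx.2)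
  -- Lemma B: total demand above cutoff m is at most the mass above c m
  have keyB : ∀ m, (∑ i ∈ Finset.Icc m K, demand f K p i) ≤ 1 - cdf f (c m) := by
    intro m
    have hrw : ∀ i, demand f K p i = ∫ x in Icc (0:ℝ) 1, (demandSet K p i).indicator f x := by
      intro i
      rw [setIntegral_indicator (hmeasD i),
        inter_eq_self_of_subset_right (demandSet_subset K p i)]
      rfl
    have hint : ∀ i : ℕ, Integrable ((demandSet K p i).indicator f)
        (volume.restrict (Icc (0:ℝ) 1)) := fun i => hfi.indicator (hmeasD i)
    have hsum : (∑ i ∈ Finset.Icc m K, demand f K p i)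
        = ∫ x in Icc (0:ℝ) 1, (∑ i ∈ Finset.Icc m K, (demandSet K p i).indicator f x) := by
      rw [integral_finset_sum _ (fun i _ => hint i)]
      exact Finset.sum_congr rfl fun i _ => hrw i
    have hae : ∀ᵐ x ∂(volume.restrict (Icc (0:ℝ) 1)),
        (∑ i ∈ Finset.Icc m K, (demandSet K p i).indicator f x)
          ≤ (Icc (c m) 1).indicator f x := by
      have hN' : ∀ᵐ x ∂(volume.restrict (Icc (0:ℝ) 1)), x ∉ N :=
        ae_restrict_of_ae (measure_eq_zero_iff_ae_notMem.mp hNnull)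
      filter_upwards [hN'] with x hxN
      by_cases hex : ∃ i ∈ Finset.Icc m K, x ∈ demandSet K p i
      · obtain ⟨i₀, hi₀, hxi₀⟩ := hex
        have hsingle : (∑ i ∈ Finset.Icc m K, (demandSet K p i).indicator f x)
            = (demandSet K p i₀).indicator f x := by
          apply Finset.sum_eq_single_of_mem i₀ hi₀
          intro j hj hne
          apply Set.indicator_of_notMem
          intro hxj
          apply hxN
          rcases Nat.lt_or_ge j i₀ with hlt | hge
          · exact Set.mem_iUnion.mpr ⟨j, Set.mem_iUnion.mpr ⟨i₀,
              Set.mem_iUnion.mpr ⟨⟨hlt, (Finset.mem_Icc.mp hi₀).2⟩, hxj, hxi₀⟩⟩⟩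
          · have hlt : i₀ < j := lt_of_le_of_ne hge (Ne.symm hne)
            exact Set.mem_iUnion.mpr ⟨i₀, Set.mem_iUnion.mpr ⟨j,
              Set.mem_iUnion.mpr ⟨⟨hlt, (Finset.mem_Icc.mp hj).2⟩, hxi₀, hxj⟩⟩⟩
        rw [hsingle, Set.indicator_of_mem hxi₀]
        have hxmem : x ∈ Icc (c m) 1 := by
          refine ⟨csInf_le (hbdd m) ?_, hxi₀.1.2⟩
          exact mem_union_left _ (mem_biUnion hi₀ hxi₀)
        rw [Set.indicator_of_mem hxmem]
      · push_neg at hex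
        have hzero : (∑ i ∈ Finset.Icc m K, (demandSet K p i).indicator f x) = 0 :=
          Finset.sum_eq_zero fun i hi => Set.indicator_of_notMem (hex i hi) f
        rw [hzero]
        exact Set.indicator_nonneg (fun y _ => hf_nonneg y) x
    have hmono : (∫ x in Icc (0:ℝ) 1, (∑ i ∈ Finset.Icc m K, (demandSet K p i).indicator f x))
        ≤ ∫ x in Icc (0:ℝ) 1, (Icc (c m) 1).indicator f x := by
      apply integral_mono_ae (integrable_finset_sum _ (fun i _ => hint i))
        (hfi.indicator measurableSet_Icc) hae
    have hrhs : (∫ x in Icc (0:ℝ) 1, (Icc (c m) 1).indicator f x) = 1 - cdf f (c m) := by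
      rw [setIntegral_indicator measurableSet_Icc,
        inter_eq_self_of_subset_right (Icc_subset_Icc_left (hcmem m).1),
        cdf_split f hfi hf_prob (hcmem m)]
    rw [hsum, ← hrhs]
    exact hmono
  -- final chain
  have hchain : TR f K p ≤ ∑ m ∈ Finset.Icc 1 K, (c m / K) * (1 - cdf f (c m)) := by
    have step1 : TR f K p ≤
        ∑ i ∈ Finset.Icc 1 K, (∑ m ∈ Finset.Ioc 0 i, c m / K) * demand f K p i := by
      apply Finset.sum_le_sum
      intro i hi
      by_cases hne : (demandSet K p i).Nonempty
      · exact mul_le_mul_of_nonneg_right (keyA i (Finset.mem_Icc.mp hi).2 hne)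
          (demand_nonneg f hf_nonneg K p i)
      · rw [Set.not_nonempty_iff_eq_empty] at hne
        simp [demand, hne]
    have step2 : ∑ i ∈ Finset.Icc 1 K, (∑ m ∈ Finset.Ioc 0 i, c m / K) * demand f K p i
        = ∑ m ∈ Finset.Icc 1 K, (c m / K) * (∑ i ∈ Finset.Icc m K, demand f K p i) := by
      have e1 : ∀ i ∈ Finset.Icc 1 K,
          (∑ m ∈ Finset.Ioc 0 i, c m / K) * demand f K p i
          = ∑ m ∈ Finset.Icc 1 K, (if m ≤ i then (c m / K) * demand f K p i else 0) := by
        intro i hi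
        have hi' := Finset.mem_Icc.mp hi
        rw [Finset.sum_mul, ← Finset.sum_filter]
        apply Finset.sum_congr _ (fun _ _ => rfl)
        ext m
        simp only [Finset.mem_Ioc, Finset.mem_filter, Finset.mem_Icc]
        omega
      rw [Finset.sum_congr rfl e1, Finset.sum_comm]
      apply Finset.sum_congr rfl
      intro m hm
      have hm' := Finset.mem_Icc.mp hm
      rw [← Finset.sum_filter, Finset.mul_sum]
      apply Finset.sum_congr _ (fun _ _ => rfl)
      ext i
      simp only [Finset.mem_Icc, Finset.mem_filter]
      omega
    rw [step2] at step1
    refine le_trans step1 (Finset.sum_le_sum fun m _ => ?_)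
    exact mul_le_mul_of_nonneg_left (keyB m) (div_nonneg (hcmem m).1 hK'.le)
  refine le_trans hchain ?_
  have hlast : ∀ m ∈ Finset.Icc 1 K, (c m / K) * (1 - cdf f (c m))
      ≤ (1 / K) * (t * (1 - cdf f t)) := by
    intro m _
    have := hmax (hcmem m)
    simp only [] at this
    calc (c m / K) * (1 - cdf f (c m)) = (1 / K) * (c m * (1 - cdf f (c m))) := by ring
    _ ≤ (1 / K) * (t * (1 - cdf f t)) := by
        apply mul_le_mul_of_nonneg_left this (by positivity)
  refine le_trans (Finset.sum_le_sum hlast) ?_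
  rw [Finset.sum_const, Nat.card_Icc]
  simp only [nsmul_eq_mul]
  have : ((K + 1 - 1 : ℕ) : ℝ) = K := by norm_num
  rw [this]
  field_simp
  exact le_rfl

/-- if `f` is strictly regular, then for every `K ≥ 1` and every price
schedule `p`, `TR(p) ≤ max_{t ∈ [0,1]} t·(1 − F(t))`; the maximum is attained, and for
any maximizer `t*` the posted-price schedule `p_{t*}(i) = t*·i/K` achieves
`TR(p_{t*}) = t*·(1 − F(t*))`.  Hence a posted-price schedule is optimal. -/
theorem posted_price_optimal
    (f : ℝ → ℝ)
    (hf_nonneg : ∀ x, 0 ≤ f x)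
    (hf_prob : ∫ x in Icc (0 : ℝ) 1, f x = 1)
    (hf_smooth : ContDiffOn ℝ 1 f (Ioo (0 : ℝ) 1))
    (hf_one : 0 < f 1)
    (hreg : ∀ᵐ x ∂(volume.restrict (Icc (0 : ℝ) 1)), 0 < x * deriv f x + 2 * f x) :
    (∃ t ∈ Icc (0 : ℝ) 1, IsMaxOn (fun s => s * (1 - cdf f s)) (Icc (0 : ℝ) 1) t) ∧
    ∀ K : ℕ, 1 ≤ K → ∀ t ∈ Icc (0 : ℝ) 1,
      IsMaxOn (fun s => s * (1 - cdf f s)) (Icc (0 : ℝ) 1) t →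
        (∀ p : ℕ → ℝ, p 0 = 0 → TR f K p ≤ t * (1 - cdf f t)) ∧
        TR f K (posted K t) = t * (1 - cdf f t) := by
  have hfi := integrableOn_of_prob f hf_prob
  have hcont : ContinuousOn (fun s => s * (1 - cdf f s)) (Icc (0:ℝ) 1) :=
    continuousOn_id.mul (continuousOn_const.sub (continuousOn_cdf f hfi))
  obtain ⟨t₀, ht₀, hmax₀⟩ := isCompact_Icc.exists_isMaxOn (nonempty_Icc.mpr zero_le_one) hcont
  refine ⟨⟨t₀, ht₀, hmax₀⟩, ?_⟩
  intro K hK t ht hmax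
  exact ⟨fun p hp0 => TR_le f hf_nonneg hfi hf_prob K hK ht hmax p hp0,
    TR_posted f hfi hf_prob K hK ht⟩

end Stmt0
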